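/- Let Y be a finite-dimensional real inner product space, let B ⊆ Y be a nonempty compact convex set with support function σ_B(y) = sup_{u ∈ B} ⟨y, u⟩, let c ≥ 0, and let h : Y → ℝ be a convex differentiable function satisfying σ_B(y) ≤ h(y) ≤ σ_B(y) + c for all y ∈ Y. Then ∇h(y) ∈ B for every y ∈ Y. -/

import Mathlib

open scoped InnerProductSpace
open Filter Topology

/-- Gradient inequality for convex differentiable functions:
`h z ≥ h y + ⟪∇h(y), z - y⟫`. -/
lemma convex_gradient_ineq {Y : Type*} [NormedAddCommGroup Y] [InnerProductSpace ℝ Y]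
    [CompleteSpace Y]
    (h : Y → ℝ) (hconv : ConvexOn ℝ Set.univ h) {y gy : Y}
    (hgrad : HasGradientAt h gy y) (z : Y) :
    h y + ⟪gy, z - y⟫_ℝ ≤ h z := by
  set v := z - y with hv
  have hline : HasDerivAt (fun t : ℝ => y + t • v) v 0 := by
    simpa using ((hasDerivAt_id (0:ℝ)).smul_const v).const_add y
  have hφ : HasDerivAt (fun t : ℝ => h (y + t • v)) ⟪gy, v⟫_ℝ 0 := by
    have h0 : HasFDerivAt h ((InnerProductSpace.toDual ℝ Y) gy) (y + (0:ℝ) • v) := by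
      simpa using hgrad.hasFDerivAt
    have := h0.comp_hasDerivAt 0 hline
    simp at this; exact this
  have hslope : ∀ t ∈ Set.Ioo (0:ℝ) 1, slope (fun t : ℝ => h (y + t • v)) 0 t ≤ h z - h y := by
    intro t ht
    have hco := hconv.2 (Set.mem_univ y) (Set.mem_univ z) (by linarith [ht.2] : (0:ℝ) ≤ 1 - t)
      (le_of_lt ht.1) (by ring)
    have hyz : (1 - t) • y + t • z = y + t • v := by rw [hv]; module
    rw [hyz] at hco
    simp only [smul_eq_mul] at hco
    rw [slope_def_field]
    rw [sub_zero, div_le_iff₀ ht.1]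
    simp only [zero_smul, add_zero]
    nlinarith
  have htend : Filter.Tendsto (slope (fun t : ℝ => h (y + t • v)) 0)
      (𝓝[>] (0:ℝ)) (𝓝 ⟪gy, v⟫_ℝ) :=
    (hasDerivAt_iff_tendsto_slope.1 hφ).mono_left
      (nhdsWithin_mono 0 (fun t ht => ne_of_gt ht))
  have : ⟪gy, v⟫_ℝ ≤ h z - h y := by
    refine le_of_tendsto htend ?_
    filter_upwards [Ioo_mem_nhdsGT_of_mem (by norm_num : (0:ℝ) ∈ Set.Ico (0:ℝ) 1)] with t ht
    exact hslope t ht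
  linarith

/-- If `h` is a convex differentiable function sandwiched between the support function
`σ_B` of a nonempty compact convex set `B` and `σ_B + c`, then the gradient of `h` lies
in `B` at every point. -/
theorem grad_of_sandwiched_support_function_mem
    {Y : Type*} [NormedAddCommGroup Y] [InnerProductSpace ℝ Y] [FiniteDimensional ℝ Y]
    (B : Set Y) (hBne : B.Nonempty) (hBcompact : IsCompact B) (hBconv : Convex ℝ B)
    (c : ℝ) (hc : 0 ≤ c)
    (h : Y → ℝ) (hconv : ConvexOn ℝ Set.univ h)
    (g : Y → Y) (hgrad : ∀ y, HasGradientAt h (g y) y)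
    (hsand : ∀ y : Y, sSup ((fun u => ⟪y, u⟫_ℝ) '' B) ≤ h y ∧
      h y ≤ sSup ((fun u => ⟪y, u⟫_ℝ) '' B) + c) :
    ∀ y : Y, g y ∈ B := by
  set σ : Y → ℝ := fun w => sSup ((fun u => ⟪w, u⟫_ℝ) '' B) with hσ
  have hbdd : ∀ w : Y, BddAbove ((fun u => ⟪w, u⟫_ℝ) '' B) :=
    fun w => (hBcompact.image (Continuous.inner continuous_const continuous_id)).bddAbove
  have hle : ∀ w : Y, ∀ u ∈ B, ⟪w, u⟫_ℝ ≤ σ w :=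
    fun w u hu => le_csSup (hbdd w) ⟨u, hu, rfl⟩
  have hσle : ∀ w : Y, ∀ a : ℝ, (∀ u ∈ B, ⟪w, u⟫_ℝ ≤ a) → σ w ≤ a := by
    intro w a ha
    exact csSup_le (hBne.image _) (by rintro x ⟨u, hu, rfl⟩; exact ha u hu)
  intro y
  by_contra hmem
  obtain ⟨f, u, hfB, hfg⟩ := geometric_hahn_banach_closed_point hBconv hBcompact.isClosed hmem
  obtain ⟨v, hv⟩ := (InnerProductSpace.toDual ℝ Y).surjective f
  have hfv : ∀ x, f x = ⟪v, x⟫_ℝ := fun x => by rw [← hv]; rfl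
  have hσv : σ v ≤ u := hσle v u (fun w hw => by rw [← hfv]; exact (hfB w hw).le)
  have hgt : u < ⟪v, g y⟫_ℝ := by rw [← hfv]; exact hfg
  set d := ⟪v, g y⟫_ℝ - u with hd
  have hdpos : 0 < d := by simp [hd]; linarith
  have key : ∀ t : ℝ, 0 ≤ t → t * (⟪v, g y⟫_ℝ - σ v) ≤ c := by
    intro t ht
    have h1 : h y + ⟪g y, (y + t • v) - y⟫_ℝ ≤ h (y + t • v) :=
      convex_gradient_ineq h hconv (hgrad y) (y + t • v)
    have h2 : h (y + t • v) ≤ σ (y + t • v) + c := (hsand (y + t • v)).2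
    have h3 : σ (y + t • v) ≤ σ y + t * σ v := by
      apply hσle
      intro w hw
      rw [inner_add_left, real_inner_smul_left]
      exact add_le_add (hle y w hw) (mul_le_mul_of_nonneg_left (hle v w hw) ht)
    have h4 : σ y ≤ h y := (hsand y).1
    have h5 : ⟪g y, (y + t • v) - y⟫_ℝ = t * ⟪v, g y⟫_ℝ := by
      rw [add_sub_cancel_left, real_inner_smul_right, real_inner_comm]
    nlinarith
  have := key ((c + 1) / d) (by positivity)
  have hvd : ⟪v, g y⟫_ℝ - σ v ≥ d := by simp [hd]; linarith
  have : c + 1 ≤ c := by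
    calc c + 1 = (c + 1) / d * d := by field_simp
    _ ≤ (c + 1) / d * (⟪v, g y⟫_ℝ - σ v) := by
        apply mul_le_mul_of_nonneg_left hvd (by positivity)
    _ ≤ c := this
  linarith
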